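/- arXiv:1203.4926 — 6 statements merged into one kernel-verified Lean document; each statement's English description precedes it below -/
import Mathlib

section
/- Let R be a commutative ring and A a commutative R-algebra. The map from nil(A) to N_R(A) sending a nilpotent element n of A to the class of (0,n) is an injective homomorphism of non-unital rings whose image is exactly the nilradical of N_R(A); in particular it induces an isomorphism of non-unital rings nil(A) ≅ nil(N_R(A)). -/
variable (R A : Type*) [CommRing R] [CommRing A] [Algebra R A]

/-- The subring `T = {(r,a) ∈ R × A : a - r·1_A ∈ nil(A)}` of `R × A`. -/
def NRT : Subring (R × A) where
  carrier := {x | x.2 - algebraMap R A x.1 ∈ nilradical A}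
  one_mem' := by simp
  zero_mem' := by simp
  mul_mem' := by
    intro x y hx hy
    show x.2 * y.2 - algebraMap R A (x.1 * y.1) ∈ nilradical A
    have h : x.2 * y.2 - algebraMap R A (x.1 * y.1)
        = x.2 * (y.2 - algebraMap R A y.1)
          + algebraMap R A y.1 * (x.2 - algebraMap R A x.1) := by
      rw [map_mul]; ring
    rw [h]
    exact add_mem (Ideal.mul_mem_left _ _ hy) (Ideal.mul_mem_left _ _ hx)
  add_mem' := by
    intro x y hx hy
    show x.2 + y.2 - algebraMap R A (x.1 + y.1) ∈ nilradical A
    have h : x.2 + y.2 - algebraMap R A (x.1 + y.1)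
        = (x.2 - algebraMap R A x.1) + (y.2 - algebraMap R A y.1) := by
      rw [map_add]; ring
    rw [h]
    exact add_mem hx hy
  neg_mem' := by
    intro x hx
    show -x.2 - algebraMap R A (-x.1) ∈ nilradical A
    have h : -x.2 - algebraMap R A (-x.1) = -(x.2 - algebraMap R A x.1) := by
      rw [map_neg]; ring
    rw [h]
    exact neg_mem hx

/-- The ideal `I = {(r,0) : r ∈ nil(R)}` of `T`. -/
def NRI : Ideal (NRT R A) where
  carrier := {x | x.val.2 = 0 ∧ x.val.1 ∈ nilradical R}
  add_mem' := by
    intro x y hx hy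
    exact ⟨by show x.val.2 + y.val.2 = 0; rw [hx.1, hy.1, add_zero], add_mem hx.2 hy.2⟩
  zero_mem' := ⟨rfl, zero_mem _⟩
  smul_mem' := by
    intro c x hx
    refine ⟨?_, Ideal.mul_mem_left _ _ hx.2⟩
    show c.val.2 * x.val.2 = 0
    rw [hx.1, mul_zero]

/-- `N_R(A) = T/I`. -/
def NRA := NRT R A ⧸ NRI R A

noncomputable instance : CommRing (NRA R A) := Ideal.Quotient.commRing (NRI R A)

/-- The unit map `R → T`, `r ↦ (r, r·1_A)`. -/
def NRunit : R →+* NRT R A where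
  toFun r := ⟨(r, algebraMap R A r), show algebraMap R A r - algebraMap R A r ∈ nilradical A by simp⟩
  map_one' := by apply Subtype.ext; simp [Prod.ext_iff]
  map_mul' r s := by apply Subtype.ext; simp [Prod.ext_iff]
  map_zero' := by apply Subtype.ext; simp [Prod.ext_iff]
  map_add' r s := by apply Subtype.ext; simp [Prod.ext_iff]

/-- The `R`-algebra structure on `N_R(A)`, `r ↦ class of (r, r·1_A)`. -/
noncomputable instance : Algebra R (NRA R A) :=
  ((Ideal.Quotient.mk (NRI R A)).comp (NRunit R A)).toAlgebra

/-- The canonical `R`-algebra map `ε_A : N_R(A) → A` induced by `(r,a) ↦ a`. -/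
noncomputable def NReps : NRA R A →ₐ[R] A :=
  { Ideal.Quotient.lift (NRI R A) ((RingHom.snd R A).comp (NRT R A).subtype)
      (fun x hx => hx.1) with
    commutes' := fun r => rfl }

/-- The map `nil(A) → N_R(A)`, `n ↦ class of (0, n)`. -/
noncomputable def nilToNRA (n : nilradical A) : NRA R A :=
  Ideal.Quotient.mk (NRI R A) ⟨((0 : R), (n : A)), show (n : A) - algebraMap R A 0 ∈ nilradical A by simpa using n.2⟩

theorem stmt0 :
    (∀ (x y : A) (hx : x ∈ nilradical A) (hy : y ∈ nilradical A),
      nilToNRA R A ⟨x + y, add_mem hx hy⟩ = nilToNRA R A ⟨x, hx⟩ + nilToNRA R A ⟨y, hy⟩) ∧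
    (∀ (x y : A) (hx : x ∈ nilradical A) (hy : y ∈ nilradical A),
      nilToNRA R A ⟨x * y, Ideal.mul_mem_left _ _ hy⟩
        = nilToNRA R A ⟨x, hx⟩ * nilToNRA R A ⟨y, hy⟩) ∧
    Function.Injective (nilToNRA R A) ∧
    Set.range (nilToNRA R A) = (nilradical (NRA R A) : Set (NRA R A)) := by
  refine ⟨?_, ?_, ?_, ?_⟩
  · intro x y hx hy
    show Ideal.Quotient.mk _ _ = Ideal.Quotient.mk _ _ + Ideal.Quotient.mk _ _
    refine Eq.trans ?_ ((Ideal.Quotient.mk (NRI R A)).map_add _ _)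
    congr 1
    apply Subtype.ext
    simp [Prod.ext_iff]
  · intro x y hx hy
    show Ideal.Quotient.mk _ _ = Ideal.Quotient.mk _ _ * Ideal.Quotient.mk _ _
    refine Eq.trans ?_ ((Ideal.Quotient.mk (NRI R A)).map_mul _ _)
    congr 1
    apply Subtype.ext
    simp [Prod.ext_iff]
  · rintro ⟨x, hx⟩ ⟨y, hy⟩ h
    rw [nilToNRA, nilToNRA] at h
    replace h := Ideal.Quotient.eq.mp h
    have h2 := h.1
    simp only at h2
    have : x - y = 0 := h2
    exact Subtype.ext (by linear_combination this)
  · ext z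
    constructor
    · rintro ⟨⟨n, hn⟩, rfl⟩
      rw [mem_nilradical] at hn
      obtain ⟨k, hk⟩ := hn
      refine ⟨k + 1, ?_⟩
      show (Ideal.Quotient.mk (NRI R A) _) ^ (k + 1) = 0
      rw [← (Ideal.Quotient.mk (NRI R A)).map_pow, Ideal.Quotient.eq_zero_iff_mem]
      constructor
      · show ((⟨((0 : R), n), _⟩ : NRT R A) ^ (k + 1)).val.2 = 0
        rw [SubmonoidClass.coe_pow]
        show (((0 : R), n) : R × A).2 ^ (k + 1) = 0
        simp [pow_succ, hk]
      · show ((⟨((0 : R), n), _⟩ : NRT R A) ^ (k + 1)).val.1 ∈ nilradical R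
        rw [SubmonoidClass.coe_pow]
        show (((0 : R), n) : R × A).1 ^ (k + 1) ∈ nilradical R
        simp
    · intro hz
      rw [SetLike.mem_coe, mem_nilradical] at hz
      obtain ⟨⟨⟨r, a⟩, ht⟩, rfl⟩ := Ideal.Quotient.mk_surjective (I := NRI R A) z
      obtain ⟨k, hk⟩ := hz
      replace hk := Ideal.Quotient.eq_zero_iff_mem.mp (((Ideal.Quotient.mk (NRI R A)).map_pow _ _).trans hk)
      have ha2 : a ^ k = 0 := by
        have := hk.1
        rwa [SubmonoidClass.coe_pow] at this
      have hr : r ∈ nilradical R := by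
        have := hk.2
        rw [SubmonoidClass.coe_pow] at this
        rw [mem_nilradical] at this ⊢
        exact IsNilpotent.of_pow (this : IsNilpotent ((r, a).1 ^ k))
      have ha : a ∈ nilradical A := ⟨k, ha2⟩
      refine ⟨⟨a, ha⟩, ?_⟩
      rw [nilToNRA]
      refine Ideal.Quotient.eq.mpr ?_
      refine ⟨?_, ?_⟩
      · show a - a = 0
        simp
      · show (0 : R) - r ∈ nilradical R
        simpa using (nilradical R).neg_mem hr
end

section
/- Let R be a commutative ring. For every commutative R-algebra A, the canonical map ε_{N_R(A)} : N_R(N_R(A)) → N_R(A) is an isomorphism of R-algebras; that is, N_R takes values in the full subcategory C of commutative R-algebras B for which ε_B : N_R(B) → B is an isomorphism. -/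
variable (R A : Type*) [CommRing R] [CommRing A] [Algebra R A]

/-- The quotient map `T → N_R(A)` as a ring hom with codomain `NRA`. -/
noncomputable def mkNRA : NRT R A →+* NRA R A := Ideal.Quotient.mk (NRI R A)

lemma mkNRA_eq_zero_iff (x : NRT R A) : mkNRA R A x = 0 ↔ x ∈ NRI R A :=
  Ideal.Quotient.eq_zero_iff_mem

set_option synthInstance.maxHeartbeats 1000000 in
theorem stmt1 : Function.Bijective (NReps R (NRA R A)) := by
  constructor
  · rw [injective_iff_map_eq_zero]
    intro x hx
    obtain ⟨t, rfl⟩ := Ideal.Quotient.mk_surjective x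
    have h2 : t.val.2 = 0 := hx
    have hmem : t.val.2 - algebraMap R (NRA R A) t.val.1 ∈ nilradical (NRA R A) := t.2
    rw [h2, zero_sub] at hmem
    have hnil : IsNilpotent (algebraMap R (NRA R A) t.val.1) := by
      simpa using (mem_nilradical.mp hmem).neg
    obtain ⟨k, hk⟩ := hnil
    have hk' : mkNRA R A ((NRunit R A t.val.1) ^ k) = 0 := by
      rw [map_pow]; exact hk
    have hmem2 := ((mkNRA_eq_zero_iff R A _).mp hk').2
    have hval : ((NRunit R A t.val.1 ^ k : NRT R A) : R × A).1 = t.val.1 ^ k := by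
      rw [SubmonoidClass.coe_pow]; rfl
    rw [hval] at hmem2
    obtain ⟨m, hm⟩ := hmem2
    refine Ideal.Quotient.eq_zero_iff_mem.mpr ⟨h2, ⟨k * m, ?_⟩⟩
    rw [pow_mul]; exact hm
  · intro b
    obtain ⟨t, rfl⟩ := Ideal.Quotient.mk_surjective b
    have hmem : mkNRA R A t - algebraMap R (NRA R A) t.val.1 ∈ nilradical (NRA R A) := by
      have ht : IsNilpotent (t.val.2 - algebraMap R A t.val.1) := t.2
      obtain ⟨k, hk⟩ := ht
      have halg : algebraMap R (NRA R A) t.val.1 = mkNRA R A (NRunit R A t.val.1) := rfl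
      rw [mem_nilradical]
      refine ⟨k + 1, ?_⟩
      rw [halg, ← map_sub, ← map_pow, mkNRA_eq_zero_iff]
      have hv : (((t - NRunit R A t.val.1) ^ (k + 1) : NRT R A) : R × A)
          = ((t : R × A) - (NRunit R A t.val.1 : R × A)) ^ (k + 1) := by
        rw [SubmonoidClass.coe_pow]; rfl
      constructor
      · show (((t - NRunit R A t.val.1) ^ (k + 1) : NRT R A) : R × A).2 = 0
        rw [hv, Prod.pow_snd]
        show (t.val.2 - algebraMap R A t.val.1) ^ (k + 1) = 0
        rw [pow_succ, hk, zero_mul]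
      · show (((t - NRunit R A t.val.1) ^ (k + 1) : NRT R A) : R × A).1 ∈ nilradical R
        rw [hv, Prod.pow_fst]
        show (t.val.1 - t.val.1) ^ (k + 1) ∈ nilradical R
        rw [sub_self, zero_pow (Nat.succ_ne_zero k)]
        exact zero_mem _
    exact ⟨Ideal.Quotient.mk _ ⟨(t.val.1, mkNRA R A t), hmem⟩, rfl⟩
end

section
/- Let R be a commutative ring, let B be a commutative R-algebra such that the canonical map ε_B : N_R(B) → B is an isomorphism, and let A be any commutative R-algebra. Then composition with ε_A : N_R(A) → A gives a bijection from the set of R-algebra homomorphisms B → N_R(A) to the set of R-algebra homomorphisms B → A; that is, N_R is right adjoint to the inclusion of the subcategory C of R-algebras on which ε is an isomorphism. -/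
variable (R A : Type*) [CommRing R] [CommRing A] [Algebra R A]

section Aux

variable {R A}

lemma NReps_mk (t : NRT R A) :
    NReps R A (Ideal.Quotient.mk (NRI R A) t) = t.val.2 := rfl

lemma algebraMap_NRA (r : R) :
    algebraMap R (NRA R A) r = Ideal.Quotient.mk (NRI R A) (NRunit R A r) := rfl

instance : IsReduced (R ⧸ nilradical R) :=
  (Ideal.isRadical_iff_quotient_reduced _).mp (Ideal.radical_isRadical 0)

/-- The projection `π : N_R(A) → R/nil(R)`. -/
noncomputable def NRpi : NRA R A →ₐ[R] R ⧸ nilradical R :=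
  { Ideal.Quotient.lift (NRI R A)
      ((Ideal.Quotient.mk (nilradical R)).comp
        ((RingHom.fst R A).comp (NRT R A).subtype))
      (fun x hx => by
        simpa [Ideal.Quotient.eq_zero_iff_mem] using hx.2) with
    commutes' := fun r => rfl }

lemma NRpi_mk (t : NRT R A) :
    NRpi (Ideal.Quotient.mk (NRI R A) t) = Ideal.Quotient.mk (nilradical R) t.val.1 := rfl

lemma NRA_ext {x y : NRA R A} (h2 : NReps R A x = NReps R A y)
    (h1 : NRpi x = NRpi y) : x = y := by
  obtain ⟨t, rfl⟩ := Ideal.Quotient.mk_surjective x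
  obtain ⟨s, rfl⟩ := Ideal.Quotient.mk_surjective y
  rw [NReps_mk, NReps_mk] at h2
  rw [NRpi_mk, NRpi_mk, Ideal.Quotient.eq] at h1
  refine Ideal.Quotient.eq.mpr ?_
  exact ⟨by show t.val.2 - s.val.2 = 0; rw [h2, sub_self], h1⟩

lemma alghom_to_quot_eq {B : Type*} [CommRing B] [Algebra R B]
    (φ : B →ₐ[R] R ⧸ nilradical R) {b : B} {r : R}
    (h : b - algebraMap R B r ∈ nilradical B) :
    φ b = algebraMap R (R ⧸ nilradical R) r := by
  have hnil : IsNilpotent (φ (b - algebraMap R B r)) :=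
    (mem_nilradical.mp h).map φ
  have h0 : φ (b - algebraMap R B r) = 0 := IsReduced.eq_zero _ hnil
  have : φ b - algebraMap R (R ⧸ nilradical R) r = 0 := by
    rw [← φ.commutes r, ← map_sub, h0]
  exact sub_eq_zero.mp this

lemma NR_surj_form {B : Type*} [CommRing B] [Algebra R B]
    (hB : Function.Surjective (NReps R B)) (b : B) :
    ∃ r : R, b - algebraMap R B r ∈ nilradical B := by
  obtain ⟨x, hx⟩ := hB b
  obtain ⟨t, rfl⟩ := Ideal.Quotient.mk_surjective x
  rw [NReps_mk] at hx
  exact ⟨t.val.1, hx ▸ t.property⟩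

/-- Functoriality: `f : B →ₐ[R] A` induces `N_R(B) →ₐ[R] N_R(A)`. -/
noncomputable def NRmap {B : Type*} [CommRing B] [Algebra R B] (f : B →ₐ[R] A) :
    NRA R B →ₐ[R] NRA R A :=
  { Ideal.Quotient.lift (NRI R B)
      ((Ideal.Quotient.mk (NRI R A)).comp
        { toFun := fun t => (⟨(t.val.1, f t.val.2), by
            show f t.val.2 - algebraMap R A t.val.1 ∈ nilradical A
            have : f t.val.2 - algebraMap R A t.val.1
                = f (t.val.2 - algebraMap R B t.val.1) := by
              rw [map_sub, f.commutes]
            rw [this]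
            exact mem_nilradical.mpr ((mem_nilradical.mp t.property).map f)⟩ : NRT R A)
          map_one' := by apply Subtype.ext; exact Prod.ext rfl (map_one f)
          map_mul' := fun t s => by apply Subtype.ext; exact Prod.ext rfl (map_mul f _ _)
          map_zero' := by apply Subtype.ext; exact Prod.ext rfl (map_zero f)
          map_add' := fun t s => by apply Subtype.ext; exact Prod.ext rfl (map_add f _ _) })
      (fun x hx => by
        rw [RingHom.comp_apply, Ideal.Quotient.eq_zero_iff_mem]
        exact ⟨by show f x.val.2 = 0; rw [hx.1, map_zero], hx.2⟩) with
    commutes' := fun r => by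
      show Ideal.Quotient.mk (NRI R A) _ = Ideal.Quotient.mk (NRI R A) (NRunit R A r)
      congr 1
      apply Subtype.ext
      exact Prod.ext rfl (f.commutes r) }

lemma NRmap_mk {B : Type*} [CommRing B] [Algebra R B] (f : B →ₐ[R] A) (t : NRT R B) :
    NRmap f (Ideal.Quotient.mk (NRI R B) t)
      = Ideal.Quotient.mk (NRI R A) ⟨(t.val.1, f t.val.2), by
          show f t.val.2 - algebraMap R A t.val.1 ∈ nilradical A
          have : f t.val.2 - algebraMap R A t.val.1
              = f (t.val.2 - algebraMap R B t.val.1) := by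
            rw [map_sub, f.commutes]
          rw [this]
          exact mem_nilradical.mpr ((mem_nilradical.mp t.property).map f)⟩ := rfl

end Aux

theorem stmt2 (B : Type*) [CommRing B] [Algebra R B]
    (hB : Function.Bijective (NReps R B)) :
    Function.Bijective fun f : B →ₐ[R] NRA R A => (NReps R A).comp f := by
  constructor
  · intro f g h
    have hpi : (NRpi.comp f : B →ₐ[R] R ⧸ nilradical R) = NRpi.comp g := by
      ext b
      obtain ⟨r, hr⟩ := NR_surj_form hB.2 b
      exact (alghom_to_quot_eq (NRpi.comp f) hr).trans
        (alghom_to_quot_eq (NRpi.comp g) hr).symm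
    ext b
    exact NRA_ext (AlgHom.congr_fun h b) (AlgHom.congr_fun hpi b)
  · intro f
    let e := AlgEquiv.ofBijective (NReps R B) hB
    refine ⟨(NRmap f).comp (e.symm : B →ₐ[R] NRA R B), ?_⟩
    ext b
    show NReps R A (NRmap f (e.symm b)) = f b
    obtain ⟨t, ht⟩ := Ideal.Quotient.mk_surjective (e.symm b : NRA R B)
    have hb : t.val.2 = b := by
      have : NReps R B (e.symm b) = b := e.apply_symm_apply b
      rw [← ht, NReps_mk] at this
      exact this
    rw [← ht, NRmap_mk, NReps_mk]
    show f t.val.2 = f b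
    rw [hb]
end

section
/- Let R be a commutative ring whose additive group is ℤ-torsion-free, and let Φ be a right exact functor from nilpotent R-algebras to abelian groups which is exact on nilpotent R-algebras whose underlying additive groups are ℚ-vector spaces and exact on nilpotent R-algebras with vanishing square. Then for every nilpotent R-algebra N whose additive group is ℤ-torsion-free, the homomorphism Φ(N) → Φ(N ⊗_ℤ ℚ) induced by the canonical map n ↦ n ⊗ 1 is injective. -/
universe u v

/-- Product of `n+1` elements of a (possibly non-unital) multiplicative structure. -/
def nprod {N : Type u} [Mul N] : (n : ℕ) → (Fin (n + 1) → N) → N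
  | 0, f => f 0
  | n + 1, f => f 0 * nprod n fun i => f i.succ

/-- A bundled nilpotent `R`-algebra: a non-unital commutative `R`-algebra `N`
such that every product of `k` elements vanishes, for some `k ≥ 1`. -/
structure NilpAlg (R : Type u) [CommRing R] : Type (u + 1) where
  carrier : Type u
  [nonUnitalCommRing : NonUnitalCommRing carrier]
  [module : Module R carrier]
  [isScalarTower : IsScalarTower R carrier carrier]
  [smulCommClass : SMulCommClass R carrier carrier]
  nilpotent : ∃ k : ℕ, ∀ f : Fin (k + 1) → carrier, nprod k f = 0

attribute [instance] NilpAlg.nonUnitalCommRing NilpAlg.module NilpAlg.isScalarTower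
  NilpAlg.smulCommClass

variable {R : Type u} [CommRing R]

/-- `0 → N₁ → N₂ → N₃ → 0` is a short exact sequence of nilpotent `R`-algebras
(exactness being measured on underlying modules/additive groups). -/
def IsSES {N₁ N₂ N₃ : NilpAlg R} (i : N₁.carrier →ₙₐ[R] N₂.carrier)
    (p : N₂.carrier →ₙₐ[R] N₃.carrier) : Prop :=
  Function.Injective i ∧ Function.Surjective p ∧ ∀ x : N₂.carrier, p x = 0 ↔ x ∈ Set.range i

/-- A functor from nilpotent `R`-algebras to abelian groups. -/
structure AbFunctor (R : Type u) [CommRing R] : Type (max (u + 1) (v + 1)) where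
  obj : NilpAlg R → Type v
  [addCommGroup : ∀ N, AddCommGroup (obj N)]
  map : ∀ {N₁ N₂ : NilpAlg R}, (N₁.carrier →ₙₐ[R] N₂.carrier) → (obj N₁ →+ obj N₂)
  map_id : ∀ N : NilpAlg R, map (NonUnitalAlgHom.id R N.carrier) = AddMonoidHom.id (obj N)
  map_comp : ∀ {N₁ N₂ N₃ : NilpAlg R} (f : N₁.carrier →ₙₐ[R] N₂.carrier)
    (g : N₂.carrier →ₙₐ[R] N₃.carrier), map (g.comp f) = (map g).comp (map f)

attribute [instance] AbFunctor.addCommGroup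

/-- `Φ` is right exact: every short exact sequence `0 → N₁ → N₂ → N₃ → 0` yields an
exact sequence `Φ(N₁) → Φ(N₂) → Φ(N₃) → 0` of abelian groups. -/
def AbFunctor.RightExact (Φ : AbFunctor.{u, v} R) : Prop :=
  ∀ {N₁ N₂ N₃ : NilpAlg R} (i : N₁.carrier →ₙₐ[R] N₂.carrier)
    (p : N₂.carrier →ₙₐ[R] N₃.carrier), IsSES i p →
      Function.Surjective (Φ.map p) ∧
      ∀ y : Φ.obj N₂, Φ.map p y = 0 ↔ y ∈ Set.range (Φ.map i)

/-- `Φ` is exact on short exact sequences all of whose terms satisfy `P`: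
the induced sequence `0 → Φ(N₁) → Φ(N₂) → Φ(N₃) → 0` is exact. -/
def AbFunctor.ExactOn (Φ : AbFunctor.{u, v} R) (P : NilpAlg R → Prop) : Prop :=
  ∀ {N₁ N₂ N₃ : NilpAlg R}, P N₁ → P N₂ → P N₃ →
    ∀ (i : N₁.carrier →ₙₐ[R] N₂.carrier) (p : N₂.carrier →ₙₐ[R] N₃.carrier), IsSES i p →
      Function.Injective (Φ.map i) ∧ Function.Surjective (Φ.map p) ∧
      ∀ y : Φ.obj N₂, Φ.map p y = 0 ↔ y ∈ Set.range (Φ.map i)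

/-- The additive group underlying `N` is (the additive group of) a `ℚ`-vector space,
i.e. it is uniquely divisible. -/
def IsQVectorSpace (N : Type v) [AddCommGroup N] : Prop :=
  ∀ n : ℤ, n ≠ 0 → Function.Bijective fun x : N => n • x



section nprodLemmas

variable {A : Type u} {B : Type v} [Mul A] [Mul B]

theorem nprod_map (g : A → B) (hg : ∀ x y, g (x * y) = g x * g y) :
    ∀ (n : ℕ) (f : Fin (n + 1) → A), g (nprod n f) = nprod n (g ∘ f)
  | 0, f => rfl
  | n + 1, f => by
    show g (f 0 * nprod n fun i => f i.succ) = g (f 0) * nprod n fun i => g (f i.succ)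
    rw [hg, nprod_map g hg n]
    rfl

theorem nprod_succ (n : ℕ) (f : Fin (n + 2) → A) :
    nprod (n + 1) f = f 0 * nprod n (fun i => f i.succ) := rfl

theorem nprod_cons (n : ℕ) (b : A) (f : Fin (n + 1) → A) :
    nprod (n + 1) (Fin.cons b f) = b * nprod n f := by
  rw [nprod_succ]
  simp [Fin.cons_zero, Fin.cons_succ]

theorem nprod_eq_zero_of_ge {A : Type u} [MulZeroClass A] {k : ℕ}
    (hk : ∀ f : Fin (k + 1) → A, nprod k f = 0) :
    ∀ m, k ≤ m → ∀ f : Fin (m + 1) → A, nprod m f = 0 := by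
  intro m
  induction m with
  | zero =>
    intro hm f
    have h0 : k = 0 := Nat.le_zero.mp hm
    subst h0
    exact hk f
  | succ m ih =>
    intro hm f
    rcases Nat.lt_or_ge k (m + 1) with h | h
    · show f 0 * nprod m (fun i => f i.succ) = 0
      rw [ih (Nat.lt_succ_iff.mp h) _, mul_zero]
    · have hkm : k = m + 1 := le_antisymm hm h
      subst hkm
      exact hk f

end nprodLemmas

section prodSpan

variable {R : Type u} [CommRing R] {A : Type u} [NonUnitalCommRing A] [Module R A]
  [IsScalarTower R A A] [SMulCommClass R A A]

/-- Span of all `(m+1)`-fold products. -/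
def prodSpan (R : Type u) [CommRing R] (A : Type u) [NonUnitalCommRing A] [Module R A]
    (m : ℕ) : Submodule R A :=
  Submodule.span R (Set.range fun f : Fin (m + 1) → A => nprod m f)

theorem nprod_mem_prodSpan (m : ℕ) (f : Fin (m + 1) → A) : nprod m f ∈ prodSpan R A m :=
  Submodule.subset_span ⟨f, rfl⟩

theorem mul_mem_prodSpan_one (a b : A) : a * b ∈ prodSpan R A 1 := by
  have : nprod 1 (Fin.cons a (fun _ => b)) = a * b := by
    rw [nprod_cons]; rfl
  exact this ▸ nprod_mem_prodSpan 1 _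

theorem left_mul_mem_prodSpan (b : A) {q : ℕ} {a : A} (ha : a ∈ prodSpan R A q) :
    b * a ∈ prodSpan R A (q + 1) := by
  induction ha using Submodule.span_induction with
  | mem x hx =>
    obtain ⟨g, rfl⟩ := hx
    exact (nprod_cons q b g) ▸ nprod_mem_prodSpan (q + 1) (Fin.cons b g)
  | zero => rw [mul_zero]; exact zero_mem _
  | add x y _ _ hx hy => rw [mul_add]; exact add_mem hx hy
  | smul r x _ hx => rw [mul_smul_comm]; exact Submodule.smul_mem _ r hx

theorem nprod_mul_mem_prodSpan :
    ∀ (p : ℕ) (g : Fin (p + 1) → A) {q : ℕ} {b : A}, b ∈ prodSpan R A q →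
      nprod p g * b ∈ prodSpan R A (p + q + 1)
  | 0, g, q, b, hb => by
    have := left_mul_mem_prodSpan (R := R) (g 0) hb
    simpa [nprod] using this
  | p + 1, g, q, b, hb => by
    show (g 0 * nprod p fun i => g i.succ) * b ∈ prodSpan R A (p + 1 + q + 1)
    rw [mul_assoc]
    have h1 := nprod_mul_mem_prodSpan p (fun i => g i.succ) hb
    have h2 := left_mul_mem_prodSpan (R := R) (g 0) h1
    have : p + q + 1 + 1 = p + 1 + q + 1 := by omega
    exact this ▸ h2

theorem mul_mem_prodSpan {p q : ℕ} {a b : A} (ha : a ∈ prodSpan R A p)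
    (hb : b ∈ prodSpan R A q) : a * b ∈ prodSpan R A (p + q + 1) := by
  induction ha using Submodule.span_induction with
  | mem x hx => obtain ⟨g, rfl⟩ := hx; exact nprod_mul_mem_prodSpan p g hb
  | zero => rw [zero_mul]; exact zero_mem _
  | add x y _ _ hx hy => rw [add_mul]; exact add_mem hx hy
  | smul r x _ hx => rw [smul_mul_assoc]; exact Submodule.smul_mem _ r hx

theorem nprod_mem_of_forall_mem_one :
    ∀ (n : ℕ) (f : Fin (n + 1) → A), (∀ i, f i ∈ prodSpan R A 1) →
      nprod n f ∈ prodSpan R A (2 * n + 1)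
  | 0, f, hf => hf 0
  | n + 1, f, hf => by
    show f 0 * nprod n (fun i => f i.succ) ∈ prodSpan R A (2 * (n + 1) + 1)
    have h1 := nprod_mem_of_forall_mem_one n (fun i => f i.succ) (fun i => hf i.succ)
    have h2 := mul_mem_prodSpan (hf 0) h1
    have : 1 + (2 * n + 1) + 1 = 2 * (n + 1) + 1 := by omega
    exact this ▸ h2

theorem eq_zero_of_mem_prodSpan {k : ℕ} (hk : ∀ f : Fin (k + 1) → A, nprod k f = 0)
    {m : ℕ} (hm : k ≤ m) {a : A} (ha : a ∈ prodSpan R A m) : a = 0 := by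
  have : prodSpan R A m ≤ ⊥ := by
    rw [prodSpan, Submodule.span_le]
    rintro x ⟨f, rfl⟩
    simp [nprod_eq_zero_of_ge hk m hm f]
  simpa using this ha

end prodSpan

section constructions

variable {R : Type u} [CommRing R]

/-- The nilpotent algebra with zero multiplication on a module. -/
def zeroMulNilp (R : Type u) [CommRing R] (V : Type u) [AddCommGroup V] [Module R V] :
    NilpAlg R :=
  letI ring : NonUnitalCommRing V :=
    { (inferInstance : AddCommGroup V) with
      mul := fun _ _ => 0
      left_distrib := fun _ _ _ => (add_zero (0 : V)).symm
      right_distrib := fun _ _ _ => (add_zero (0 : V)).symm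
      zero_mul := fun _ => rfl
      mul_zero := fun _ => rfl
      mul_assoc := fun _ _ _ => rfl
      mul_comm := fun _ _ => rfl }
  { carrier := V
    nonUnitalCommRing := ring
    module := inferInstance
    isScalarTower := ⟨fun r x y => (smul_zero r).symm⟩
    smulCommClass := ⟨fun r x y => smul_zero r⟩
    nilpotent := ⟨1, fun f => rfl⟩ }

@[simp] theorem zeroMulNilp_mul (R : Type u) [CommRing R] (V : Type u) [AddCommGroup V]
    [Module R V] (x y : (zeroMulNilp R V).carrier) : x * y = 0 := rfl

/-- The nilpotent algebra on a non-unital subalgebra. -/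
def subNilp (M : NilpAlg R) (s : NonUnitalSubalgebra R M.carrier) : NilpAlg R where
  carrier := s
  nonUnitalCommRing := inferInstance
  module := inferInstance
  isScalarTower := inferInstance
  smulCommClass := inferInstance
  nilpotent := by
    obtain ⟨k, hk⟩ := M.nilpotent
    refine ⟨k, fun f => ?_⟩
    apply Subtype.coe_injective
    have := nprod_map (Subtype.val : s → M.carrier) (fun x y => rfl) k f
    exact this.trans (hk _)

/-- Build a `NonUnitalAlgHom` from a linear map that preserves multiplication. -/
def mkHom {A B : NilpAlg R} (f : A.carrier →ₗ[R] B.carrier)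
    (hf : ∀ x y, f (x * y) = f x * f y) : A.carrier →ₙₐ[R] B.carrier :=
  { toFun := f
    map_smul' := map_smul f
    map_zero' := map_zero f
    map_add' := map_add f
    map_mul' := hf }

@[simp] theorem mkHom_apply {A B : NilpAlg R} (f : A.carrier →ₗ[R] B.carrier)
    (hf : ∀ x y, f (x * y) = f x * f y) (x : A.carrier) : mkHom f hf x = f x := rfl

end constructions

theorem key (R : Type u) [CommRing R]
    (Φ : AbFunctor.{u, v} R) (hre : Φ.RightExact)
    (hQ : Φ.ExactOn fun N => IsQVectorSpace N.carrier)
    (hsq : Φ.ExactOn fun N => ∀ x y : N.carrier, x * y = 0) :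
    ∀ k : ℕ, ∀ (N M : NilpAlg R) (j : N.carrier →ₙₐ[R] M.carrier),
      (∀ f : Fin (k + 1) → M.carrier, nprod k f = 0) →
      (∀ (n : ℤ) (x : N.carrier), n ≠ 0 → n • x = 0 → x = 0) →
      IsQVectorSpace M.carrier → Function.Injective j →
      (∀ m : M.carrier, ∃ (n : ℤ) (x : N.carrier), n ≠ 0 ∧ n • m = j x) →
      Function.Injective (Φ.map j) := by
  intro k
  induction k using Nat.strong_induction_on with
  | _ k IH =>
  intro N M j hk htf hMQ hj hdense
  rcases Nat.eq_zero_or_pos k with rfl | hkpos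
  · -- base case: `M = 0`, everything is square-zero (indeed zero)
    have hM0 : ∀ m : M.carrier, m = 0 := fun m => hk fun _ => m
    have hMsq : ∀ x y : M.carrier, x * y = 0 := fun x y => hM0 _
    have hNsq : ∀ x y : N.carrier, x * y = 0 := fun x y => by
      apply hj
      rw [map_mul, map_zero]
      exact hM0 _
    have ses : IsSES j (NonUnitalAlgHom.id R M.carrier) := by
      refine ⟨hj, Function.surjective_id, fun x => ?_⟩
      constructor
      · intro _
        exact ⟨0, by rw [map_zero]; exact (hM0 x).symm⟩
      · intro _
        exact hM0 x
    exact (hsq hNsq hMsq hMsq j (NonUnitalAlgHom.id R M.carrier) ses).1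
  · -- inductive step
    -- the submodule of products
    let M₂sub : Submodule R M.carrier := prodSpan R M.carrier 1
    have hMmul : ∀ x y : M.carrier, x * y ∈ M₂sub := fun x y => mul_mem_prodSpan_one x y
    let sM : NonUnitalSubalgebra R M.carrier :=
      { M₂sub with mul_mem' := fun {a b} _ _ => hMmul a b }
    let N₂sub : Submodule R N.carrier := M₂sub.comap (LinearMapClass.linearMap j)
    have hNmul : ∀ x y : N.carrier, x * y ∈ N₂sub := fun x y => by
      refine Submodule.mem_comap.2 ?_
      show j (x * y) ∈ M₂sub
      rw [map_mul]
      exact hMmul _ _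
    let sN : NonUnitalSubalgebra R N.carrier :=
      { N₂sub with mul_mem' := fun {a b} _ _ => hNmul a b }
    let M₂ : NilpAlg R := subNilp M sM
    let N₂ : NilpAlg R := subNilp N sN
    let QN : NilpAlg R := zeroMulNilp R (N.carrier ⧸ N₂sub)
    let QM : NilpAlg R := zeroMulNilp R (M.carrier ⧸ M₂sub)
    let J : Submodule R M.carrier := LinearMap.range (LinearMapClass.linearMap j)
    let QC : NilpAlg R := zeroMulNilp R (M.carrier ⧸ (M₂sub ⊔ J))
    -- the maps
    let iN : N₂.carrier →ₙₐ[R] N.carrier := NonUnitalSubalgebraClass.subtype sN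
    let iM : M₂.carrier →ₙₐ[R] M.carrier := NonUnitalSubalgebraClass.subtype sM
    let pN : N.carrier →ₙₐ[R] QN.carrier :=
      mkHom (A := N) (B := QN) N₂sub.mkQ (fun x y => by
        show N₂sub.mkQ (x * y) = 0
        rw [Submodule.mkQ_apply]
        exact (Submodule.Quotient.mk_eq_zero _).2 (hNmul x y))
    let pM : M.carrier →ₙₐ[R] QM.carrier :=
      mkHom (A := M) (B := QM) M₂sub.mkQ (fun x y => by
        show M₂sub.mkQ (x * y) = 0
        rw [Submodule.mkQ_apply]
        exact (Submodule.Quotient.mk_eq_zero _).2 (hMmul x y))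
    let j₂lin : N₂.carrier →ₗ[R] M₂.carrier :=
      { toFun := fun x => ⟨j x.1, x.2⟩
        map_add' := fun x y => Subtype.ext (map_add j _ _)
        map_smul' := fun r x => Subtype.ext (map_smul j r _) }
    let j₂ : N₂.carrier →ₙₐ[R] M₂.carrier :=
      mkHom (A := N₂) (B := M₂) j₂lin (fun x y => Subtype.ext (map_mul j x.1 y.1))
    let jbar : QN.carrier →ₙₐ[R] QM.carrier :=
      mkHom (A := QN) (B := QM)
        (Submodule.mapQ N₂sub M₂sub (LinearMapClass.linearMap j) (fun x hx => hx))
        (fun x y => map_zero _)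
    let pbar : QM.carrier →ₙₐ[R] QC.carrier :=
      mkHom (A := QM) (B := QC)
        (Submodule.mapQ M₂sub (M₂sub ⊔ J) LinearMap.id
          (fun x hx => Submodule.mem_sup_left hx))
        (fun x y => map_zero _)
    have jbar_mk : ∀ x : N.carrier, jbar (N₂sub.mkQ x) = M₂sub.mkQ (j x) := fun x =>
      Submodule.mapQ_apply (p := N₂sub) M₂sub (LinearMapClass.linearMap j) (h := fun _ hx => hx) x
    have pbar_mk : ∀ m : M.carrier, pbar (M₂sub.mkQ m) = (M₂sub ⊔ J).mkQ m := fun m =>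
      Submodule.mapQ_apply (p := M₂sub) (M₂sub ⊔ J) LinearMap.id
        (h := fun _ hx => Submodule.mem_sup_left hx) m
    -- short exact sequences
    have sesN : IsSES iN pN := by
      refine ⟨fun a b h => Subtype.ext h, Submodule.mkQ_surjective _, fun x => ?_⟩
      constructor
      · intro hx
        exact ⟨⟨x, (Submodule.Quotient.mk_eq_zero _).1 hx⟩, rfl⟩
      · rintro ⟨⟨y, hy⟩, rfl⟩
        exact (Submodule.Quotient.mk_eq_zero _).2 hy
    have sesM : IsSES iM pM := by
      refine ⟨fun a b h => Subtype.ext h, Submodule.mkQ_surjective _, fun x => ?_⟩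
      constructor
      · intro hx
        exact ⟨⟨x, (Submodule.Quotient.mk_eq_zero _).1 hx⟩, rfl⟩
      · rintro ⟨⟨y, hy⟩, rfl⟩
        exact (Submodule.Quotient.mk_eq_zero _).2 hy
    have sesbar : IsSES jbar pbar := by
      refine ⟨?_, ?_, ?_⟩
      · intro a b hab
        obtain ⟨x, rfl⟩ := Submodule.mkQ_surjective N₂sub a
        obtain ⟨y, rfl⟩ := Submodule.mkQ_surjective N₂sub b
        have hab' : M₂sub.mkQ (j x) = M₂sub.mkQ (j y) := by
          rw [← jbar_mk, ← jbar_mk, hab]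
        have hxy : j (x - y) ∈ M₂sub := by
          rw [map_sub]
          exact (Submodule.Quotient.eq _).1 hab'
        exact (Submodule.Quotient.eq _).2 (Submodule.mem_comap.2 hxy)
      · intro c
        obtain ⟨m, rfl⟩ := Submodule.mkQ_surjective _ c
        exact ⟨M₂sub.mkQ m, pbar_mk m⟩
      · intro x
        constructor
        · intro h
          obtain ⟨m, rfl⟩ := Submodule.mkQ_surjective M₂sub x
          have hm : m ∈ M₂sub ⊔ J := by
            have h' : (M₂sub ⊔ J).mkQ m = 0 := by rw [← pbar_mk, h]; rfl
            exact (Submodule.Quotient.mk_eq_zero _).1 h'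
          obtain ⟨a, ha, b, hb, rfl⟩ := Submodule.mem_sup.1 hm
          obtain ⟨y, rfl⟩ := hb
          refine ⟨N₂sub.mkQ y, ?_⟩
          rw [jbar_mk]
          refine ((Submodule.Quotient.eq _).2 ?_).symm
          show a + j y - j y ∈ M₂sub
          rw [add_sub_cancel_right]
          exact ha
        · rintro ⟨c, rfl⟩
          obtain ⟨y, rfl⟩ := Submodule.mkQ_surjective N₂sub c
          rw [jbar_mk, pbar_mk]
          exact (Submodule.Quotient.mk_eq_zero _).2
            (Submodule.mem_sup_right ⟨y, rfl⟩)
    -- divisibility of M₂sub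
    have hdiv : ∀ (n : ℤ), n ≠ 0 → ∀ m ∈ M₂sub, ∃ x ∈ M₂sub, n • x = m := by
      intro n hn m hm
      induction hm using Submodule.span_induction with
      | mem x hx =>
        obtain ⟨g, rfl⟩ := hx
        obtain ⟨b, hb⟩ := (hMQ n hn).2 (g 1)
        have hb' : n • b = g 1 := hb
        refine ⟨g 0 * b, hMmul _ _, ?_⟩
        show n • (g 0 * b) = nprod 1 g
        have hg : nprod 1 g = g 0 * g 1 := rfl
        rw [hg, ← hb', mul_smul_comm]
      | zero => exact ⟨0, zero_mem _, smul_zero n⟩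
      | add x y hx hy ihx ihy =>
        obtain ⟨a, haM, ha⟩ := ihx
        obtain ⟨b, hbM, hb⟩ := ihy
        exact ⟨a + b, add_mem haM hbM, by rw [smul_add, ha, hb]⟩
      | smul r x hx ihx =>
        obtain ⟨a, haM, ha⟩ := ihx
        exact ⟨r • a, Submodule.smul_mem _ r haM, by rw [smul_comm, ha]⟩
    -- Q-vector-space structures
    have hM₂Q : IsQVectorSpace M₂.carrier := by
      intro n hn
      constructor
      · intro a b hab
        apply Subtype.coe_injective
        apply (hMQ n hn).1
        exact congrArg Subtype.val hab
      · intro m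
        obtain ⟨x, hxM, hx⟩ := hdiv n hn m.1 m.2
        exact ⟨⟨x, hxM⟩, Subtype.ext hx⟩
    have hQMQ : IsQVectorSpace QM.carrier := by
      intro n hn
      constructor
      · intro a b hab
        obtain ⟨x, rfl⟩ := Submodule.mkQ_surjective M₂sub a
        obtain ⟨y, rfl⟩ := Submodule.mkQ_surjective M₂sub b
        have hab' : M₂sub.mkQ (n • x) = M₂sub.mkQ (n • y) := hab
        have h1 : n • (x - y) ∈ M₂sub := by
          rw [smul_sub]
          exact (Submodule.Quotient.eq _).1 hab'
        obtain ⟨z, hzM, hz⟩ := hdiv n hn _ h1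
        have hxyz : x - y = z := (hMQ n hn).1 hz.symm
        exact (Submodule.Quotient.eq _).2 (hxyz ▸ hzM)
      · intro c
        obtain ⟨m, rfl⟩ := Submodule.mkQ_surjective M₂sub c
        obtain ⟨x, hx⟩ := (hMQ n hn).2 m
        have hx' : n • x = m := hx
        refine ⟨M₂sub.mkQ x, ?_⟩
        show M₂sub.mkQ (n • x) = M₂sub.mkQ m
        rw [hx']
    -- square-zero facts
    have sqQN : ∀ x y : QN.carrier, x * y = 0 := fun _ _ => rfl
    have sqQM : ∀ x y : QM.carrier, x * y = 0 := fun _ _ => rfl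
    have sqQC : ∀ x y : QC.carrier, x * y = 0 := fun _ _ => rfl
    -- data for the inductive hypothesis
    have hk₂ : ∀ f : Fin (k / 2 + 1) → M₂.carrier, nprod (k / 2) f = 0 := by
      intro f
      apply Subtype.coe_injective
      have h0 := nprod_map (Subtype.val : M₂.carrier → M.carrier) (fun _ _ => rfl) (k / 2) f
      have h1 : nprod (k / 2) (Subtype.val ∘ f) ∈ prodSpan R M.carrier (2 * (k / 2) + 1) :=
        nprod_mem_of_forall_mem_one _ _ (fun i => (f i).2)
      have h2 : nprod (k / 2) (Subtype.val ∘ f) = 0 :=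
        eq_zero_of_mem_prodSpan hk (by omega) h1
      exact h0.trans h2
    have htf₂ : ∀ (n : ℤ) (x : N₂.carrier), n ≠ 0 → n • x = 0 → x = 0 :=
      fun n x hn h => Subtype.ext (htf n x.1 hn (congrArg Subtype.val h))
    have hj₂ : Function.Injective j₂ :=
      fun a b h => Subtype.ext (hj (congrArg Subtype.val h))
    have hdense₂ : ∀ m : M₂.carrier, ∃ (n : ℤ) (x : N₂.carrier), n ≠ 0 ∧ n • m = j₂ x := by
      intro m
      obtain ⟨n, x, hn, hx⟩ := hdense m.1
      have hxN : x ∈ N₂sub := Submodule.mem_comap.2 (by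
        show j x ∈ M₂sub
        rw [← hx]
        exact zsmul_mem m.2 n)
      exact ⟨n, ⟨x, hxN⟩, hn, Subtype.ext hx⟩
    have hIH : Function.Injective (Φ.map j₂) :=
      IH (k / 2) (Nat.div_lt_self hkpos one_lt_two) N₂ M₂ j₂ hk₂ htf₂ hM₂Q hj₂ hdense₂
    -- commuting squares
    have c1 : j.comp iN = iM.comp j₂ := by
      apply NonUnitalAlgHom.ext
      intro x
      rfl
    have c2 : jbar.comp pN = pM.comp j := by
      apply NonUnitalAlgHom.ext
      intro x
      exact jbar_mk x
    -- the diagram chase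
    rw [injective_iff_map_eq_zero]
    intro y hy
    have hbar := (hsq sqQN sqQM sqQC jbar pbar sesbar).1
    have h1 : Φ.map pN y = 0 := by
      apply hbar
      rw [map_zero]
      calc Φ.map jbar (Φ.map pN y) = Φ.map (jbar.comp pN) y := by rw [Φ.map_comp]; rfl
        _ = Φ.map (pM.comp j) y := by rw [c2]
        _ = Φ.map pM (Φ.map j y) := by rw [Φ.map_comp]; rfl
        _ = 0 := by rw [hy, map_zero]
    obtain ⟨z, hz⟩ := ((hre iN pN sesN).2 y).1 h1
    have hQinj := (hQ hM₂Q hMQ hQMQ iM pM sesM).1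
    have h2 : Φ.map j₂ z = 0 := by
      apply hQinj
      rw [map_zero]
      calc Φ.map iM (Φ.map j₂ z) = Φ.map (iM.comp j₂) z := by rw [Φ.map_comp]; rfl
        _ = Φ.map (j.comp iN) z := by rw [c1]
        _ = Φ.map j (Φ.map iN z) := by rw [Φ.map_comp]; rfl
        _ = Φ.map j y := by rw [hz]
        _ = 0 := hy
    have h3 : z = 0 := hIH (by rw [h2, map_zero])
    rw [← hz, h3, map_zero]

/-- The scalar extension `N ⊗_ℤ ℚ`, together with the canonical map
`j : N → N ⊗_ℤ ℚ`, `n ↦ n ⊗ 1`, is encoded by its characterizing properties among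
nilpotent `R`-algebras: `j` is injective (`N` being ℤ-torsion-free), the target is a
`ℚ`-vector space, and every element of the target is an integer-denominator multiple
of an element in the image of `j`. -/
theorem stmt4 (R : Type u) [CommRing R]
    (hR : ∀ (n : ℤ) (r : R), n ≠ 0 → n • r = 0 → r = 0)
    (Φ : AbFunctor.{u, v} R) (hre : Φ.RightExact)
    (hQ : Φ.ExactOn fun N => IsQVectorSpace N.carrier)
    (hsq : Φ.ExactOn fun N => ∀ x y : N.carrier, x * y = 0)
    (N : NilpAlg R) (htf : ∀ (n : ℤ) (x : N.carrier), n ≠ 0 → n • x = 0 → x = 0)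
    (M : NilpAlg R) (j : N.carrier →ₙₐ[R] M.carrier)
    (hMQ : IsQVectorSpace M.carrier)
    (hj : Function.Injective j)
    (hdense : ∀ m : M.carrier, ∃ (n : ℤ) (x : N.carrier), n ≠ 0 ∧ n • m = j x) :
    Function.Injective (Φ.map j) := by
  obtain ⟨k, hk⟩ := M.nilpotent
  exact key R Φ hre hQ hsq k N M j hk htf hMQ hj hdense
end

section
/- Let R be a commutative ring whose additive group is ℤ-torsion-free, let d ≥ 1, and let f be a formal power series in d variables x₁,…,x_d with coefficients in R ⊗_ℤ ℚ. Suppose that for every d-tuple (g₁,…,g_d) of one-variable formal power series with integer coefficients and zero constant term, the power series f(g₁(x),…,g_d(x)) obtained by substitution has all of its coefficients in the image of the canonical map R → R ⊗_ℤ ℚ. Then every coefficient of f lies in the image of R → R ⊗_ℤ ℚ. -/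
open scoped TensorProduct

theorem myDigitsInj (C : ℕ) : ∀ (d : ℕ) (a b : Fin d → ℕ),
    (∀ i, a i < C) → (∀ i, b i < C) →
    (∑ i, a i * C ^ (i : ℕ)) = (∑ i, b i * C ^ (i : ℕ)) → a = b := by
  intro d
  induction d with
  | zero => intro a b _ _ _; funext i; exact absurd i.2 (Nat.not_lt_zero _)
  | succ d ih =>
    intro a b ha hb h
    rw [Fin.sum_univ_succ, Fin.sum_univ_succ] at h
    simp only [Fin.val_zero, pow_zero, mul_one, Fin.val_succ, pow_succ'] at h
    have h' : a 0 + C * ∑ i : Fin d, a i.succ * C ^ (i : ℕ)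
        = b 0 + C * ∑ i : Fin d, b i.succ * C ^ (i : ℕ) := by
      rw [Finset.mul_sum, Finset.mul_sum]
      convert h using 3 <;> ring
    have h0 : a 0 = b 0 := by
      have := congrArg (· % C) h'
      simpa [Nat.add_mul_mod_self_left, Nat.mod_eq_of_lt (ha 0), Nat.mod_eq_of_lt (hb 0)]
        using this
    have htail : ∑ i : Fin d, a i.succ * C ^ (i : ℕ) = ∑ i : Fin d, b i.succ * C ^ (i : ℕ) := by
      rw [h0] at h'
      have := Nat.add_left_cancel h'
      exact Nat.eq_of_mul_eq_mul_left (lt_of_le_of_lt (Nat.zero_le _) (ha 0)) this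
    have := ih (fun i => a i.succ) (fun i => b i.succ) (fun i => ha _) (fun i => hb _) htail
    funext i
    refine Fin.cases ?_ ?_ i
    · exact h0
    · intro j; exact congrFun this j

theorem myKey (d : ℕ) (hd : 1 ≤ d) (C : ℕ) (m₀ m : Fin d → ℕ)
    (hC : ∑ i, m₀ i < C) (hC2 : 2 ≤ C)
    (h : ∑ i, m i * (C ^ (d + 1) + C ^ (i : ℕ))
        = ∑ i, m₀ i * (C ^ (d + 1) + C ^ (i : ℕ))) : m = m₀ := by
  have hC1 : 1 ≤ C := by omega
  have hPpos : 0 < C ^ (d + 1) := Nat.pow_pos (by omega)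
  have hsplit : ∀ a : Fin d → ℕ, ∑ i, a i * (C ^ (d + 1) + C ^ (i : ℕ))
      = (∑ i, a i) * C ^ (d + 1) + ∑ i, a i * C ^ (i : ℕ) := by
    intro a
    rw [Finset.sum_mul, ← Finset.sum_add_distrib]
    exact Finset.sum_congr rfl fun i _ => by ring
  rw [hsplit, hsplit] at h
  set s := ∑ i, m i with hs_def
  set s₀ := ∑ i, m₀ i with hs₀_def
  set T := ∑ i, m i * C ^ (i : ℕ) with hT_def
  set T₀ := ∑ i, m₀ i * C ^ (i : ℕ) with hT₀_def
  have hTle : ∀ a : Fin d → ℕ, (∑ i, a i * C ^ (i : ℕ)) ≤ (∑ i, a i) * C ^ (d - 1) := by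
    intro a
    rw [Finset.sum_mul]
    refine Finset.sum_le_sum fun i _ => Nat.mul_le_mul_left _ ?_
    exact Nat.pow_le_pow_right hC1 (by omega)
  have hPeq : C ^ (d - 1) * C ^ 2 = C ^ (d + 1) := by
    rw [← pow_add]; congr 1; omega
  have hbound : ∀ a : Fin d → ℕ, (∑ i, a i) < C → (∑ i, a i * C ^ (i : ℕ)) < C ^ (d + 1) := by
    intro a ha
    calc (∑ i, a i * C ^ (i : ℕ)) ≤ (∑ i, a i) * C ^ (d - 1) := hTle a
    _ < C ^ 2 * C ^ (d - 1) := by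
        refine Nat.mul_lt_mul_of_lt_of_le ?_ le_rfl (Nat.pow_pos (by omega))
        calc (∑ i, a i) < C := ha
        _ ≤ C ^ 2 := by nlinarith
    _ = C ^ (d + 1) := by rw [mul_comm]; exact hPeq
  have hT₀lt : T₀ < C ^ (d + 1) := hbound m₀ hC
  have hs_le : s ≤ s₀ := by
    have h1 : s * C ^ (d + 1) < (s₀ + 1) * C ^ (d + 1) := by
      calc s * C ^ (d + 1) ≤ s * C ^ (d + 1) + T := Nat.le_add_right _ _
      _ = s₀ * C ^ (d + 1) + T₀ := h
      _ < s₀ * C ^ (d + 1) + C ^ (d + 1) := by omega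
      _ = (s₀ + 1) * C ^ (d + 1) := by ring
    exact Nat.lt_succ_iff.mp (Nat.lt_of_mul_lt_mul_right h1)
  have hTlt : T < C ^ (d + 1) := by
    have h1 : T ≤ s * C ^ (d - 1) := hTle m
    have h2 : s * C ^ (d - 1) ≤ s₀ * C ^ (d - 1) := Nat.mul_le_mul_right _ hs_le
    have h3 := hbound m₀ hC
    have h4 : T₀ ≤ s₀ * C ^ (d - 1) := hTle m₀
    calc T ≤ s₀ * C ^ (d - 1) := le_trans h1 h2
    _ < C ^ 2 * C ^ (d - 1) := by
        refine Nat.mul_lt_mul_of_lt_of_le ?_ le_rfl (Nat.pow_pos (by omega))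
        nlinarith
    _ = C ^ (d + 1) := by rw [mul_comm]; exact hPeq
  have hTT : T = T₀ := by
    have h5 : (s * C ^ (d + 1) + T) % C ^ (d + 1) = (s₀ * C ^ (d + 1) + T₀) % C ^ (d + 1) := by
      rw [h]
    rw [add_comm (s * C ^ (d + 1)) T, add_comm (s₀ * C ^ (d + 1)) T₀, Nat.add_mul_mod_self_right, Nat.add_mul_mod_self_right, Nat.mod_eq_of_lt hTlt, Nat.mod_eq_of_lt hT₀lt] at h5; exact h5
  have hss : s = s₀ := by
    rw [hTT] at h
    have := Nat.add_right_cancel h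
    exact Nat.eq_of_mul_eq_mul_right hPpos this
  refine myDigitsInj C d m m₀ (fun i => ?_) (fun i => ?_) hTT
  · calc m i ≤ s := Finset.single_le_sum (fun j _ => Nat.zero_le (m j)) (Finset.mem_univ i)
    _ = s₀ := hss
    _ < C := hC
  · calc m₀ i ≤ s₀ := Finset.single_le_sum (fun j _ => Nat.zero_le (m₀ j)) (Finset.mem_univ i)
    _ < C := hC


/-- The `n`-th coefficient of the substitution `f(G₁(x), …, G_d(x))` of a `d`-tuple `G`
of one-variable power series into a `d`-variable power series `f`.  When every `Gᵢ` has
zero constant term, the product `∏ᵢ Gᵢ^(mᵢ)` has order at least `m₁ + ⋯ + m_d`, so only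
exponent vectors `m` with all entries `≤ n` can contribute to the `n`-th coefficient,
and the following finite sum computes it. -/
noncomputable def substCoeff {S : Type*} [CommRing S] {d : ℕ}
    (f : MvPowerSeries (Fin d) S) (G : Fin d → PowerSeries S) (n : ℕ) : S :=
  ∑ m : Fin d → Fin (n + 1),
    MvPowerSeries.coeff (Finsupp.equivFunOnFinite.symm fun i => (m i : ℕ)) f *
      PowerSeries.coeff n (∏ i, G i ^ (m i : ℕ))

/-- Let `R` be a commutative ring whose additive group is ℤ-torsion-free and let `f` be
a power series in `d ≥ 1` variables over `R ⊗_ℤ ℚ`.  If for every `d`-tuple of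
one-variable integral power series with zero constant term the substituted series has
all coefficients in the image of `R → R ⊗_ℤ ℚ`, then all coefficients of `f` lie in the
image of `R → R ⊗_ℤ ℚ`. -/
theorem stmt8 (R : Type*) [CommRing R]
    (hR : ∀ (n : ℤ) (r : R), n ≠ 0 → n • r = 0 → r = 0)
    (d : ℕ) (hd : 1 ≤ d) (f : MvPowerSeries (Fin d) (R ⊗[ℤ] ℚ))
    (H : ∀ g : Fin d → PowerSeries ℤ, (∀ i, PowerSeries.constantCoeff (g i) = 0) →
      ∀ n : ℕ,
        substCoeff f (fun i => PowerSeries.map (Int.castRingHom (R ⊗[ℤ] ℚ)) (g i)) n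
          ∈ Set.range (Algebra.TensorProduct.includeLeftRingHom : R →+* R ⊗[ℤ] ℚ)) :
    ∀ m : Fin d →₀ ℕ, MvPowerSeries.coeff m f
      ∈ Set.range (Algebra.TensorProduct.includeLeftRingHom : R →+* R ⊗[ℤ] ℚ) := by
  intro m₀
  set C : ℕ := (∑ i, m₀ i) + 2 with hC_def
  set e : Fin d → ℕ := fun i => C ^ (d + 1) + C ^ (i : ℕ) with he_def
  set N : ℕ := ∑ i, m₀ i * e i with hN_def
  have hepos : ∀ i, 1 ≤ e i := by
    intro i
    have : 1 ≤ C ^ (d + 1) := Nat.one_le_pow _ _ (by omega)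
    simp only [he_def]; omega
  have hm₀le : ∀ i, m₀ i < N + 1 := by
    intro i
    have h1 : m₀ i ≤ m₀ i * e i := Nat.le_mul_of_pos_right _ (hepos i)
    have h2 : m₀ i * e i ≤ N :=
      Finset.single_le_sum (f := fun j => m₀ j * e j) (fun j _ => Nat.zero_le _)
        (Finset.mem_univ i)
    omega
  have hg0 : ∀ i, PowerSeries.constantCoeff ((PowerSeries.X : PowerSeries ℤ) ^ e i) = 0 := by
    intro i
    rw [map_pow, PowerSeries.constantCoeff_X, zero_pow (by have := hepos i; omega)]
  have key := H (fun i => PowerSeries.X ^ e i) hg0 N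
  have hsub : substCoeff f
      (fun i => PowerSeries.map (Int.castRingHom (R ⊗[ℤ] ℚ))
        ((fun i => (PowerSeries.X : PowerSeries ℤ) ^ e i) i)) N
      = MvPowerSeries.coeff m₀ f := by
    unfold substCoeff
    have hmap : ∀ i, PowerSeries.map (Int.castRingHom (R ⊗[ℤ] ℚ))
        ((PowerSeries.X : PowerSeries ℤ) ^ e i)
        = (PowerSeries.X : PowerSeries (R ⊗[ℤ] ℚ)) ^ e i := by
      intro i; rw [map_pow, PowerSeries.map_X]
    simp only [hmap]
    have hprod : ∀ m : Fin d → Fin (N + 1),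
        ∏ i, ((PowerSeries.X : PowerSeries (R ⊗[ℤ] ℚ)) ^ e i) ^ ((m i : ℕ))
        = (PowerSeries.X : PowerSeries (R ⊗[ℤ] ℚ)) ^ (∑ i, e i * (m i : ℕ)) := by
      intro m
      simp only [← pow_mul]
      exact Finset.prod_pow_eq_pow_sum _ _ _
    set m₁ : Fin d → Fin (N + 1) := fun i => ⟨m₀ i, hm₀le i⟩ with hm₁_def
    rw [Finset.sum_eq_single m₁]
    · rw [hprod]
      rw [PowerSeries.coeff_X_pow]
      rw [if_pos, mul_one]
      · have harg : (Finsupp.equivFunOnFinite.symm fun i => ((m₁ i : ℕ))) = m₀ :=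
          Finsupp.equivFunOnFinite_symm_coe m₀
        rw [harg]
      · simp only [hN_def]
        exact Finset.sum_congr rfl fun i _ => (mul_comm _ _)
    · intro b _ hb
      rw [hprod, PowerSeries.coeff_X_pow, if_neg, mul_zero]
      intro hcon
      apply hb
      have heq : ∑ i, (b i : ℕ) * (C ^ (d + 1) + C ^ (i : ℕ))
          = ∑ i, m₀ i * (C ^ (d + 1) + C ^ (i : ℕ)) := by
        calc ∑ i, (b i : ℕ) * (C ^ (d + 1) + C ^ (i : ℕ)) = ∑ i, e i * (b i : ℕ) := by
              refine Finset.sum_congr rfl fun i _ => ?_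
              simp only [he_def]; ring
        _ = N := hcon.symm
        _ = ∑ i, m₀ i * (C ^ (d + 1) + C ^ (i : ℕ)) := by
              simp only [hN_def, he_def]
      have := myKey d hd C (⇑m₀) (fun i => (b i : ℕ)) (by omega) (by omega) heq
      funext i
      exact Fin.ext (congrFun this i)
    · intro hcon; exact absurd (Finset.mem_univ m₁) hcon
  rw [hsub] at key
  exact key
end

section
/- For every natural number m, let P_m(λ) = Σ_{k=0}^{m} binom(m,k)² λ^k ∈ ℤ[λ]. Then every coefficient of the polynomial 4λ(1−λ)·P_m''(λ) + 4(1−2λ)·P_m'(λ) − P_m(λ) in ℤ[λ] is divisible by 2m+1. -/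
open Polynomial

/-- `P_m(λ) = Σ_{k=0}^{m} binom(m,k)² λ^k ∈ ℤ[λ]`. -/
noncomputable def Pm (m : ℕ) : Polynomial ℤ :=
  ∑ k ∈ Finset.range (m + 1), C ((m.choose k : ℤ) ^ 2) * X ^ k

lemma pm_coeff (m k : ℕ) : (Pm m).coeff k = (m.choose k : ℤ) ^ 2 := by
  rw [Pm, finset_sum_coeff]
  simp only [coeff_C_mul, coeff_X_pow, mul_ite, mul_one, mul_zero]
  rw [Finset.sum_ite_eq (Finset.range (m+1)) k]
  rcases le_or_gt k m with h | h
  · simp [Nat.lt_succ_iff.mpr h]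
  · simp [Nat.choose_eq_zero_of_lt h]

lemma key_s12 (m n : ℕ) :
    4 * ((n:ℤ)+1)^2 * (m.choose (n+1) : ℤ)^2 - (2*(n:ℤ)+1)^2 * (m.choose n : ℤ)^2
      = (2*(m:ℤ)+1) * ((2*(m:ℤ) - 4*(n:ℤ) - 1) * (m.choose n : ℤ)^2) := by
  rcases lt_or_ge n m with h | h
  · have hc : (m.choose (n+1) : ℤ) * ((n:ℤ)+1) = (m.choose n : ℤ) * ((m:ℤ) - n) := by
      have := Nat.choose_succ_right_eq m n
      have h2 : ((m.choose (n+1)) * (n+1) : ℤ) = ((m.choose n) * (m - n) : ℕ) := by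
        exact_mod_cast congrArg (Nat.cast : ℕ → ℤ) this
      rw [h2]
      push_cast [Nat.cast_sub h.le]
      ring
    linear_combination (4*((m.choose (n+1):ℤ)*((n:ℤ)+1) + (m.choose n:ℤ)*((m:ℤ)-(n:ℤ)))) * hc
  · rcases eq_or_lt_of_le h with rfl | h'
    · simp only [Nat.choose_eq_zero_of_lt (Nat.lt_succ_self m), Nat.choose_self,
        Nat.cast_zero, Nat.cast_one]
      ring
    · simp [Nat.choose_eq_zero_of_lt h', Nat.choose_eq_zero_of_lt (Nat.lt_succ_of_lt h')]

/-- Every coefficient of `4λ(1−λ)·P_m″(λ) + 4(1−2λ)·P_m′(λ) − P_m(λ)` is divisible by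
`2m+1`. -/
theorem stmt12 (m : ℕ) (n : ℕ) :
    (2 * m + 1 : ℤ) ∣
      (4 * (X * (1 - X)) * derivative (derivative (Pm m))
        + 4 * (1 - 2 * X) * derivative (Pm m) - Pm m).coeff n := by
  have hE : (4 * (X * (1 - X)) * derivative (derivative (Pm m))
        + 4 * (1 - 2 * X) * derivative (Pm m) - Pm m)
      = C 4 * (X * derivative (derivative (Pm m)))
        - C 4 * (X^2 * derivative (derivative (Pm m)))
        + C 4 * derivative (Pm m) - C 8 * (X * derivative (Pm m)) - Pm m := by
    simp only [map_ofNat]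
    ring
  rw [hE]
  have hd : ∀ k, (derivative (Pm m)).coeff k = (m.choose (k+1) : ℤ)^2 * (k+1) := by
    intro k
    rw [coeff_derivative, pm_coeff]
    try push_cast
    try ring
  have hdd : ∀ k, (derivative (derivative (Pm m))).coeff k
      = (m.choose (k+2) : ℤ)^2 * (k+2) * (k+1) := by
    intro k
    rw [coeff_derivative, hd]
    try push_cast
    try ring
  simp only [coeff_sub, coeff_add, coeff_C_mul]
  match n with
  | 0 =>
    have h0 : ((X:Polynomial ℤ)^2 * derivative (derivative (Pm m))).coeff 0 = 0 := by
      simp [mul_coeff_zero, coeff_X_pow]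
    simp only [h0, mul_coeff_zero, coeff_X_zero, zero_mul, mul_zero, sub_zero, zero_sub,
      hd, pm_coeff]
    refine ⟨(2*(m:ℤ) - 4*(0:ℤ) - 1) * (m.choose 0 : ℤ)^2, ?_⟩
    have := key_s12 m 0
    push_cast at this ⊢
    linear_combination this
  | 1 =>
    have h1 : ((X:Polynomial ℤ)^2 * derivative (derivative (Pm m))).coeff 1 = 0 := by
      rw [pow_two, mul_assoc, coeff_X_mul, mul_coeff_zero, coeff_X_zero, zero_mul]
    simp only [coeff_X_mul, h1, mul_zero, hd, hdd, pm_coeff]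
    refine ⟨(2*(m:ℤ) - 4*(1:ℤ) - 1) * (m.choose 1 : ℤ)^2, ?_⟩
    have := key_s12 m 1
    push_cast at this ⊢
    linear_combination this
  | (k+2) =>
    have h2 : ((X:Polynomial ℤ)^2 * derivative (derivative (Pm m))).coeff (k+2)
        = (derivative (derivative (Pm m))).coeff k := coeff_X_pow_mul _ 2 k
    simp only [coeff_X_mul, h2, hd, hdd, pm_coeff]
    refine ⟨(2*(m:ℤ) - 4*((k:ℤ)+2) - 1) * (m.choose (k+2) : ℤ)^2, ?_⟩
    have := key_s12 m (k+2)
    push_cast at this ⊢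
    linear_combination this
end
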